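/- Let n ≥ 4 be an even integer and set m = n/2. The (m+1)-st complex derivative of the function ξ ↦ ξ/(ξ+i)^{m}, evaluated at ξ = i, equals −i^{−n−2} · 2^{−n−1} · (2·C(−m, m) + C(−m, m+1)) · (m+1)!. -/

import Mathlib

open Complex Topology

/-- Generalized binomial coefficient `C(N,K) = N(N-1)⋯(N-K+1)/K!` as a complex number. -/
noncomputable def gbinom (N : ℤ) (K : ℕ) : ℂ :=
  (∏ j ∈ Finset.range K, ((N : ℂ) - j)) / (Nat.factorial K : ℂ)

lemma contDiffOn_zpow' (z : ℤ) (N : ℕ∞) : ContDiffOn ℂ N (fun y : ℂ => y ^ z) {(0:ℂ)}ᶜ := by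
  intro y hy
  apply ContDiffAt.contDiffWithinAt
  obtain ⟨k, rfl | rfl⟩ := z.eq_nat_or_neg
  · simpa only [zpow_natCast, id_eq] using (contDiff_id.pow k).contDiffAt
  · have hy0 : y ≠ 0 := hy
    have h : ContDiffAt ℂ N (fun y : ℂ => (y ^ k)⁻¹) y :=
      ((contDiff_id.pow k).contDiffAt).inv (pow_ne_zero k hy0)
    simpa only [zpow_neg, zpow_natCast] using h

lemma iteratedDeriv_zpow'' (z : ℤ) (k : ℕ) (x : ℂ) :
    iteratedDeriv k (fun y : ℂ => y ^ z) x
      = (∏ j ∈ Finset.range k, ((z : ℂ) - j)) * x ^ (z - k) := by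
  rw [iteratedDeriv_eq_iterate, iter_deriv_zpow]

lemma iteratedDeriv_eq_within (f : ℂ → ℂ) (k : ℕ) {x : ℂ} (hx : x ≠ 0) :
    iteratedDeriv k f x = iteratedDerivWithin k f {(0:ℂ)}ᶜ x := by
  rw [iteratedDerivWithin_eq_iteratedFDerivWithin,
    iteratedFDerivWithin_of_isOpen k isOpen_compl_singleton (Set.mem_compl_singleton_iff.mpr hx),
    iteratedDeriv_eq_iteratedFDeriv]

theorem stmt_9 (n m : ℕ) (hn : 4 ≤ n) (hm : n = 2 * m) :
    iteratedDeriv (m + 1) (fun ξ : ℂ => ξ / (ξ + I)^m) I =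
      -I ^ (-(n:ℤ) - 2) * (2:ℂ) ^ (-(n:ℤ) - 1) * (2 * gbinom (-(m:ℤ)) m + gbinom (-(m:ℤ)) (m + 1)) * (Nat.factorial (m + 1) : ℂ) := by
  have hs : IsOpen ({(0:ℂ)}ᶜ) := isOpen_compl_singleton
  have hI2 : (2 : ℂ) * I ≠ 0 := by simp [I_ne_zero]
  have hx : (2 : ℂ) * I ∈ ({(0:ℂ)}ᶜ) := Set.mem_compl_singleton_iff.mpr hI2
  set g : ℂ → ℂ := fun y => y ^ ((1:ℤ) - m) - I * y ^ (-(m:ℤ)) with hg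
  -- step 1: replace function near I
  have h1 : (fun ξ : ℂ => ξ / (ξ + I)^m) =ᶠ[𝓝 I] (fun ξ : ℂ => g (ξ + I)) := by
    have hne : ∀ᶠ ξ : ℂ in 𝓝 I, ξ ≠ -I := eventually_ne_nhds (by
      simp [Complex.ext_iff]; norm_num)
    filter_upwards [hne] with ξ hξ
    have hw : ξ + I ≠ 0 := by
      intro h; apply hξ; linear_combination h
    have h1' : (ξ+I)^((1:ℤ)-m) = (ξ+I) * ((ξ+I)^m)⁻¹ := by
      rw [zpow_sub₀ hw, zpow_one, zpow_natCast, div_eq_mul_inv]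
    have h2' : (ξ+I)^(-(m:ℤ)) = ((ξ+I)^m)⁻¹ := by rw [zpow_neg, zpow_natCast]
    simp only [hg, h1', h2']
    rw [div_eq_mul_inv]
    ring
  rw [h1.iteratedDeriv_eq, iteratedDeriv_comp_add_const]
  show iteratedDeriv (m+1) g (I + I) = _
  have hII : I + I = 2 * I := by ring
  rw [hII]
  -- step 2: compute iteratedDeriv of g at 2I
  have hgsub : g = (fun y : ℂ => y ^ ((1:ℤ) - m)) - (fun y : ℂ => I * y ^ (-(m:ℤ))) := rfl
  have hf1 : ContDiffOn ℂ (m+1 : ℕ) (fun y : ℂ => y ^ ((1:ℤ) - m)) {(0:ℂ)}ᶜ :=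
    contDiffOn_zpow' _ _
  have hf2 : ContDiffOn ℂ (m+1 : ℕ) (fun y : ℂ => I * y ^ (-(m:ℤ))) {(0:ℂ)}ᶜ :=
    contDiffOn_const.mul (contDiffOn_zpow' _ _)
  have hsplit : iteratedDeriv (m+1) g (2*I)
      = iteratedDeriv (m+1) (fun y : ℂ => y ^ ((1:ℤ) - m)) (2*I)
        - I * iteratedDeriv (m+1) (fun y : ℂ => y ^ (-(m:ℤ))) (2*I) := by
    rw [iteratedDeriv_eq_within g _ hI2, hgsub,
      iteratedDerivWithin_sub hx hs.uniqueDiffOn (hf1 _ hx) (hf2 _ hx),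
      iteratedDerivWithin_const_mul hx hs.uniqueDiffOn I (contDiffOn_zpow' _ ((m+1 : ℕ) : ℕ∞) _ hx),
      ← iteratedDeriv_eq_within _ _ hI2, ← iteratedDeriv_eq_within _ _ hI2]
  rw [hsplit, iteratedDeriv_zpow'', iteratedDeriv_zpow'']
  -- step 3: arithmetic
  set Q : ℂ := ∏ j ∈ Finset.range m, (((-(m:ℤ) : ℤ) : ℂ) - j) with hQ
  have hP1 : (∏ j ∈ Finset.range (m+1), ((((1:ℤ) - m : ℤ) : ℂ) - j)) = Q * (1 - m) := by
    rw [Finset.prod_range_succ']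
    congr 1
    · apply Finset.prod_congr rfl
      intro j hj
      push_cast
      ring
    · push_cast
      ring
  have hP2 : (∏ j ∈ Finset.range (m+1), (((-(m:ℤ) : ℤ) : ℂ) - j)) = Q * (-2 * m) := by
    rw [Finset.prod_range_succ, hQ]; push_cast; ring
  rw [hP1, hP2]
  have hg1 : gbinom (-(m:ℤ)) m = Q / (Nat.factorial m : ℂ) := by rw [gbinom, hQ]
  have hg2 : gbinom (-(m:ℤ)) (m+1) = Q * (-2*m) / (Nat.factorial (m+1) : ℂ) := by
    rw [gbinom, hP2]
  rw [hg1, hg2]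
  subst hm
  have he1 : ((1:ℤ) - m) - ((m+1 : ℕ) : ℤ) = -((2*m : ℕ) : ℤ) := by push_cast; ring
  have he2 : (-(m:ℤ)) - ((m+1 : ℕ) : ℤ) = -((2*m+1 : ℕ) : ℤ) := by push_cast; ring
  have he3 : (-((2*m : ℕ):ℤ) - 2) = -((2*m+2 : ℕ) : ℤ) := by push_cast; ring
  have he4 : (-((2*m : ℕ):ℤ) - 1) = -((2*m+1 : ℕ) : ℤ) := by push_cast; ring
  rw [he1, he2, he3, he4, zpow_neg, zpow_neg, zpow_neg, zpow_neg,
    zpow_natCast, zpow_natCast, zpow_natCast, zpow_natCast]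
  have hIm : (I:ℂ)^(2*m) = (-1:ℂ)^m := by rw [pow_mul, I_sq]
  have hIm2 : (I:ℂ)^(2*m+2) = (-1:ℂ)^(m+1) := by
    rw [show 2*m+2 = 2*(m+1) by ring, pow_mul, I_sq]
  have hK1 : ((2:ℂ)*I)^(2*m) = 2^(2*m) * (-1:ℂ)^m := by rw [mul_pow, hIm]
  have hK2 : ((2:ℂ)*I)^(2*m+1) = 2^(2*m+1) * ((-1:ℂ)^m * I) := by
    rw [mul_pow, show (I:ℂ)^(2*m+1) = (-1:ℂ)^m * I by rw [pow_succ, hIm]]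
  rw [hK1, hK2, hIm2]
  have hfac : (Nat.factorial (m+1) : ℂ) = (m+1) * (Nat.factorial m : ℂ) := by
    rw [Nat.factorial_succ]; push_cast; ring
  rw [hfac]
  have h2 : (2:ℂ) ≠ 0 := two_ne_zero
  have hIne : (I:ℂ) ≠ 0 := I_ne_zero
  have hfne : (Nat.factorial m : ℂ) ≠ 0 := Nat.cast_ne_zero.mpr (Nat.factorial_ne_zero m)
  have hm1 : ((m:ℂ) + 1) ≠ 0 := by
    have := Nat.cast_ne_zero (R := ℂ) (n := m+1) |>.mpr (Nat.succ_ne_zero m)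
    push_cast at this; exact this
  have hn1 : ((-1:ℂ))^m ≠ 0 := pow_ne_zero m (by norm_num)
  field_simp
  ring
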